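/- Mediator incentive theorem: Suppose M : (⊥ ∪ S)^n → F^n × [0,U]^m is (ε, δ)-jointly differentially private, and for every input demand profile s, with probability 1-β the suggested flow is an η_eq-approximate Nash flow of the tolled routing game with per-player costs bounded by m(U+n). Then truthful reporting plus faithfully following the suggestion (the 'good behavior' strategy profile) is an η-approximate ex-post Nash equilibrium of the mediated game, where η = η_eq + m(U+n)(2ε + β + δ). -/

import Mathlib

/-- Player `i`'s cost under realized routes `g` (0/1 edge vectors) and tolls `τ`:
`Σ_e g_{i,e}·(ℓ_e(Σ_j g_{j,e}) + τ_e)`. -/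
noncomputable def pcost {n m : ℕ} (ℓ : Fin m → ℝ → ℝ)
    (g : Fin n → Fin m → ℝ) (τ : Fin m → ℝ) (i : Fin n) : ℝ :=
  ∑ e, g i e * (ℓ e (∑ j, g j e) + τ e)

/-- Player `i`'s expected cost in the mediated game when the mediator's output is drawn
from `μ` and each player `j` post-processes her suggested route with `f j`. -/
noncomputable def expCost {n m : ℕ} (ℓ : Fin m → ℝ → ℝ)
    (μ : PMF ((Fin n → Fin m → ℝ) × (Fin m → ℝ)))
    (f : Fin n → (Fin m → ℝ) → (Fin m → ℝ)) (i : Fin n) : ℝ :=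
  ∑' ω : (Fin n → Fin m → ℝ) × (Fin m → ℝ),
    (μ ω).toReal * pcost ℓ (fun j => f j (ω.1 j)) ω.2 i

open MeasureTheory ENNReal

lemma aux_exp_le {ε : ℝ} (h0 : 0 ≤ ε) (h1 : ε ≤ 1) : Real.exp ε ≤ 1 + 2 * ε := by
  have h := convexOn_exp.2 (Set.mem_univ (0:ℝ)) (Set.mem_univ (1:ℝ))
    (by linarith : (0:ℝ) ≤ 1 - ε) h0 (by ring)
  simp only [smul_eq_mul, mul_zero, mul_one, zero_add, Real.exp_zero] at h
  have he : Real.exp 1 ≤ 3 := le_of_lt (lt_trans Real.exp_one_lt_d9 (by norm_num))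
  nlinarith [h, he]

lemma aux_measurable_set (a : ENNReal) (ha : a ≠ ⊤) :
    MeasurableSet {t : ℝ | ENNReal.ofReal t < a} := by
  rcases eq_or_ne a 0 with h0 | h0
  · have : {t : ℝ | ENNReal.ofReal t < a} = ∅ := by
      ext t; simp [h0]
    rw [this]; exact MeasurableSet.empty
  · have : {t : ℝ | ENNReal.ofReal t < a} = Set.Iio a.toReal := by
      ext t
      constructor
      · intro ht
        by_cases htn : 0 ≤ t
        · exact (ENNReal.ofReal_lt_iff_lt_toReal htn ha).mp ht
        · push_neg at htn
          exact lt_of_lt_of_le htn (le_of_lt (ENNReal.toReal_pos h0 ha))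
      · intro ht
        by_cases htn : 0 ≤ t
        · exact (ENNReal.ofReal_lt_iff_lt_toReal htn ha).mpr ht
        · push_neg at htn
          show ENNReal.ofReal t < a
          rw [ENNReal.ofReal_of_nonpos (le_of_lt htn)]
          exact pos_iff_ne_zero.mpr h0
    rw [this]; exact measurableSet_Iio

lemma aux_layer (B : ℝ) (a : ENNReal) (ha : a ≤ ENNReal.ofReal B) :
    ∫⁻ t in Set.Ioo (0:ℝ) B,
      Set.indicator {t : ℝ | ENNReal.ofReal t < a} (fun _ => (1:ENNReal)) t = a := by
  have hat : a ≠ ⊤ := ne_top_of_le_ne_top ENNReal.ofReal_ne_top ha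
  rw [MeasureTheory.lintegral_indicator (aux_measurable_set a hat),
    MeasureTheory.setLIntegral_one, Measure.restrict_apply (aux_measurable_set a hat)]
  have hset : {t : ℝ | ENNReal.ofReal t < a} ∩ Set.Ioo 0 B = Set.Ioo 0 a.toReal := by
    ext t
    simp only [Set.mem_inter_iff, Set.mem_setOf_eq, Set.mem_Ioo]
    constructor
    · rintro ⟨h1, h2, h3⟩
      exact ⟨h2, (ENNReal.ofReal_lt_iff_lt_toReal (le_of_lt h2) hat).mp h1⟩
    · rintro ⟨h2, h3⟩
      refine ⟨(ENNReal.ofReal_lt_iff_lt_toReal (le_of_lt h2) hat).mpr h3, h2, ?_⟩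
      rcases le_or_gt 0 B with hB | hB
      · have := lt_of_lt_of_le h3 (ENNReal.toReal_mono ENNReal.ofReal_ne_top ha)
        rwa [ENNReal.toReal_ofReal hB] at this
      · exfalso
        have : a = 0 := le_antisymm (by rwa [ENNReal.ofReal_of_nonpos (le_of_lt hB)] at ha)
          (zero_le (a := a))
        rw [this] at h3; simp at h3; linarith
  rw [hset, Real.volume_Ioo, sub_zero, ENNReal.ofReal_toReal hat]

lemma aux_swap {Ω : Type*} (ν : PMF Ω) (g : Ω → ENNReal) (B : ℝ)
    (hg : ∀ ω, g ω ≤ ENNReal.ofReal B) :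
    ∑' ω, ν ω * g ω
      = ∫⁻ t in Set.Ioo (0:ℝ) B, ν.toOuterMeasure {ω | ENNReal.ofReal t < g ω} := by
  classical
  have hcnt : Countable ν.support := ν.support_countable.to_subtype
  have hgt : ∀ ω, g ω ≠ ⊤ := fun ω => ne_top_of_le_ne_top ENNReal.ofReal_ne_top (hg ω)
  have key : ∀ ω, ν ω * g ω = ∫⁻ t in Set.Ioo (0:ℝ) B,
      ν ω * Set.indicator {t : ℝ | ENNReal.ofReal t < g ω} (fun _ => (1:ENNReal)) t := by
    intro ω
    rw [MeasureTheory.lintegral_const_mul' _ _ (ν.apply_ne_top ω), aux_layer B (g ω) (hg ω)]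
  rw [tsum_congr key]
  have hsub : Function.support (fun ω => ∫⁻ t in Set.Ioo (0:ℝ) B,
      ν ω * Set.indicator {t : ℝ | ENNReal.ofReal t < g ω} (fun _ => (1:ENNReal)) t)
      ⊆ ν.support := by
    intro ω hω
    rw [PMF.mem_support_iff]
    intro h0
    apply hω
    simp [h0]
  rw [← tsum_subtype_eq_of_support_subset hsub]
  have hswap := MeasureTheory.lintegral_tsum (μ := volume.restrict (Set.Ioo (0:ℝ) B))
    (f := fun (ω : ν.support) (t : ℝ) =>
      ν ω.1 * Set.indicator {t : ℝ | ENNReal.ofReal t < g ω.1} (fun _ => (1:ENNReal)) t)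
    (fun ω => Measurable.aemeasurable
      ((measurable_const.indicator (aux_measurable_set (g ω.1) (hgt ω.1))).const_mul (ν ω.1)))
  rw [← hswap]
  apply lintegral_congr
  intro t
  rw [PMF.toOuterMeasure_apply]
  have hsub2 : Function.support (Set.indicator {ω | ENNReal.ofReal t < g ω} (fun a => ν a))
      ⊆ ν.support := by
    intro ω hω
    rw [PMF.mem_support_iff]
    intro h0
    apply hω
    by_cases h : ω ∈ {ω | ENNReal.ofReal t < g ω} <;> simp [Set.indicator, h, h0]
  rw [← tsum_subtype_eq_of_support_subset hsub2]
  apply tsum_congr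
  intro ω
  by_cases h : ENNReal.ofReal t < g ω.1 <;>
    simp [Set.indicator, h]

lemma aux_toReal {Ω : Type*} (ν : PMF Ω) (h : Ω → ℝ)
    (hpos : ∀ ω, ν ω ≠ 0 → 0 ≤ h ω) :
    ∑' ω, (ν ω).toReal * h ω = (∑' ω, ν ω * ENNReal.ofReal (h ω)).toReal := by
  rw [ENNReal.tsum_toReal_eq (fun ω => ENNReal.mul_ne_top (ν.apply_ne_top ω)
    ENNReal.ofReal_ne_top)]
  apply tsum_congr
  intro ω
  rcases eq_or_ne (ν ω) 0 with h0 | h0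
  · simp [h0]
  · rw [ENNReal.toReal_mul, ENNReal.toReal_ofReal (hpos ω h0)]


lemma pcost_update_congr {n m : ℕ} (ℓ : Fin m → ℝ → ℝ)
    (g g' : Fin n → Fin m → ℝ) (τ : Fin m → ℝ) (i : Fin n) (q : Fin m → ℝ)
    (h : ∀ j, j ≠ i → g j = g' j) :
    pcost ℓ (Function.update g i q) τ i = pcost ℓ (Function.update g' i q) τ i := by
  unfold pcost
  apply Finset.sum_congr rfl
  intro e _
  have hsum : ∀ j, Function.update g i q j e = Function.update g' i q j e := by
    intro j
    by_cases hj : j = i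
    · subst hj; simp
    · simp [Function.update_of_ne hj, h j hj]
  have hs : (∑ j, Function.update g i q j e) = ∑ j, Function.update g' i q j e :=
    Finset.sum_congr rfl (fun j _ => hsum j)
  rw [Function.update_self, Function.update_self, hs]

/-- Mediator incentive theorem: if the mediator `M` is `(ε,δ)`-jointly differentially
private and, with probability `1-β`, its suggested flow is an `η_eq`-approximate Nash flow
of the tolled game (with per-player costs bounded by `m(U+n)`), then good behavior
(truthful reporting plus following the suggestion) is an `η`-approximate ex-post Nash
equilibrium of the mediated game, for `η = η_eq + m(U+n)(2ε + β + δ)`. -/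
theorem mediator_incentive {S : Type*} {n m : ℕ}
    (feas : S → Set (Fin m → ℝ)) (ℓ : Fin m → ℝ → ℝ)
    (U ε δ β ηeq : ℝ)
    (hε0 : 0 ≤ ε) (hε1 : ε < 1) (hδ : 0 ≤ δ) (hβ : 0 ≤ β) (hηeq : 0 ≤ ηeq) (hU : 0 ≤ U)
    (M : (Fin n → Option S) → PMF ((Fin n → Fin m → ℝ) × (Fin m → ℝ)))
    -- `M` is `(ε,δ)`-jointly differentially private: for each player `i`, the joint
    -- distribution of the routes suggested to the other players and the tolls is
    -- insensitive to `i`'s report.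
    (hJDP : ∀ (i : Fin n) (r : Fin n → Option S) (r' : Option S)
        (B : Set (({j : Fin n // j ≠ i} → Fin m → ℝ) × (Fin m → ℝ))),
        (M r).toOuterMeasure
            {ω | ((fun j : {j : Fin n // j ≠ i} => ω.1 j.1), ω.2) ∈ B} ≤
          ENNReal.ofReal (Real.exp ε) *
            (M (Function.update r i r')).toOuterMeasure
              {ω | ((fun j : {j : Fin n // j ≠ i} => ω.1 j.1), ω.2) ∈ B}
            + ENNReal.ofReal δ)
    -- Every output of `M` consists of feasible routes (matching reported demands when
    -- reported) and tolls in `[0, U]`.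
    (hsupp : ∀ (r : Fin n → Option S) (ω), ω ∈ (M r).support →
        (∀ j, ∃ s0, ω.1 j ∈ feas s0) ∧ (∀ e, 0 ≤ ω.2 e ∧ ω.2 e ≤ U) ∧
        (∀ j s0, r j = some s0 → ω.1 j ∈ feas s0))
    -- Per-player tolled costs are bounded by `m(U+n)` (and nonnegative) whenever routes
    -- are feasible and tolls lie in `[0, U]`.
    (hbound : ∀ (g : Fin n → Fin m → ℝ) (τ : Fin m → ℝ),
        (∀ j, ∃ s0, g j ∈ feas s0) → (∀ e, 0 ≤ τ e ∧ τ e ≤ U) →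
        ∀ i : Fin n, 0 ≤ pcost ℓ g τ i ∧ pcost ℓ g τ i ≤ m * (U + n))
    -- With probability at least `1 - β`, the suggested flow is an `η_eq`-approximate
    -- Nash flow of the routing game with the output tolls added.
    (hNash : ∀ strue : Fin n → S,
        ENNReal.ofReal (1 - β) ≤
          (M (fun j => some (strue j))).toOuterMeasure
            {ω | ∀ i : Fin n, ω.1 i ∈ feas (strue i) ∧
              ∀ q ∈ feas (strue i),
                pcost ℓ ω.1 ω.2 i ≤ pcost ℓ (Function.update ω.1 i q) ω.2 i + ηeq}) :
    -- Good behavior is an `η`-approximate ex-post Nash equilibrium: for every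
    -- realization of demands, no unilateral deviation (misreporting, opting out, or
    -- post-processing the suggestion into another feasible route) gains more than `η`.
    ∀ (strue : Fin n → S) (i : Fin n) (r' : Option S)
      (f' : (Fin m → ℝ) → Fin m → ℝ), (∀ p, f' p ∈ feas (strue i)) →
      expCost ℓ (M (fun j => some (strue j))) (fun _ => id) i ≤
        expCost ℓ (M (Function.update (fun j => some (strue j)) i r'))
            (Function.update (fun _ : Fin n => (id : (Fin m → ℝ) → Fin m → ℝ)) i f') i
          + (ηeq + m * (U + n) * (2 * ε + β + δ)) := by
  intro strue i r' f' hf'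
  classical
  set B : ℝ := m * (U + n) with hBdef
  have hB0 : 0 ≤ B := mul_nonneg (Nat.cast_nonneg m) (add_nonneg hU (Nat.cast_nonneg n))
  set P : PMF ((Fin n → Fin m → ℝ) × (Fin m → ℝ)) := M (fun j => some (strue j)) with hP
  set Q : PMF ((Fin n → Fin m → ℝ) × (Fin m → ℝ)) :=
    M (Function.update (fun j => some (strue j)) i r') with hQ
  -- embedding of "others' routes + tolls" back into a full profile
  set emb : (({j : Fin n // j ≠ i} → Fin m → ℝ) × (Fin m → ℝ)) → (Fin n → Fin m → ℝ) :=
    fun z j => if h : j = i then (fun _ => 0) else z.1 ⟨j, h⟩ with hemb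
  set Φ : (({j : Fin n // j ≠ i} → Fin m → ℝ) × (Fin m → ℝ)) → ENNReal :=
    fun z => min (⨅ p : Fin m → ℝ,
      ENNReal.ofReal (pcost ℓ (Function.update (emb z) i (f' p)) z.2 i))
      (ENNReal.ofReal B) with hΦ
  set Ψ : ((Fin n → Fin m → ℝ) × (Fin m → ℝ)) → ENNReal :=
    fun ω => Φ ((fun j : {j : Fin n // j ≠ i} => ω.1 j.1), ω.2) with hΨdef
  have hΨ : ∀ ω : (Fin n → Fin m → ℝ) × (Fin m → ℝ),
      Ψ ω = min (⨅ p : Fin m → ℝ,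
        ENNReal.ofReal (pcost ℓ (Function.update ω.1 i (f' p)) ω.2 i))
        (ENNReal.ofReal B) := by
    intro ω
    have hc : ∀ p, pcost ℓ (Function.update
          (emb ((fun j : {j : Fin n // j ≠ i} => ω.1 j.1), ω.2)) i (f' p)) ω.2 i
        = pcost ℓ (Function.update ω.1 i (f' p)) ω.2 i := by
      intro p
      apply pcost_update_congr
      intro j hj
      simp [hemb, hj]
    simp only [hΨdef, hΦ]
    congr 1
    exact iInf_congr (fun p => by rw [hc p])
  have hΨle : ∀ ω, Ψ ω ≤ ENNReal.ofReal B := fun ω => by rw [hΨ ω]; exact min_le_right _ _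
  -- ENNReal cost functions
  set c : ((Fin n → Fin m → ℝ) × (Fin m → ℝ)) → ENNReal :=
    fun ω => ENNReal.ofReal (pcost ℓ ω.1 ω.2 i) with hc
  set d : ((Fin n → Fin m → ℝ) × (Fin m → ℝ)) → ENNReal :=
    fun ω => ENNReal.ofReal (pcost ℓ (Function.update ω.1 i (f' (ω.1 i))) ω.2 i) with hd
  -- support facts
  have hPsupp : ∀ ω, P ω ≠ 0 →
      (∀ j, ∃ s0, ω.1 j ∈ feas s0) ∧ (∀ e, 0 ≤ ω.2 e ∧ ω.2 e ≤ U) := by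
    intro ω hω
    have := hsupp (fun j => some (strue j)) ω (by rwa [PMF.mem_support_iff])
    exact ⟨this.1, this.2.1⟩
  have hQsupp : ∀ ω, Q ω ≠ 0 →
      (∀ j, ∃ s0, ω.1 j ∈ feas s0) ∧ (∀ e, 0 ≤ ω.2 e ∧ ω.2 e ≤ U) := by
    intro ω hω
    have := hsupp (Function.update (fun j => some (strue j)) i r') ω
      (by rwa [PMF.mem_support_iff])
    exact ⟨this.1, this.2.1⟩
  have hQfeas : ∀ ω, Q ω ≠ 0 →
      (∀ j, ∃ s0, Function.update ω.1 i (f' (ω.1 i)) j ∈ feas s0) := by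
    intro ω hω j
    by_cases hj : j = i
    · subst hj; rw [Function.update_self]; exact ⟨strue j, hf' _⟩
    · rw [Function.update_of_ne hj]; exact (hQsupp ω hω).1 j
  -- expCost identities
  have hEP : expCost ℓ P (fun _ => id) i = (∑' ω, P ω * c ω).toReal := by
    unfold expCost
    rw [aux_toReal P (fun ω => pcost ℓ (fun j => id (ω.1 j)) ω.2 i)
      (fun ω hω => (hbound ω.1 ω.2 (hPsupp ω hω).1 (hPsupp ω hω).2 i).1)]
    rfl
  have hdev : ∀ ω : (Fin n → Fin m → ℝ) × (Fin m → ℝ),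
      (fun j => Function.update (fun _ : Fin n => (id : (Fin m → ℝ) → (Fin m → ℝ))) i f' j
        (ω.1 j)) = Function.update ω.1 i (f' (ω.1 i)) := by
    intro ω
    funext j
    by_cases hj : j = i
    · subst hj; simp
    · simp [Function.update_of_ne hj]
  have hEQ : expCost ℓ Q
      (Function.update (fun _ : Fin n => (id : (Fin m → ℝ) → (Fin m → ℝ))) i f') i
      = (∑' ω, Q ω * d ω).toReal := by
    unfold expCost
    have := fun ω : (Fin n → Fin m → ℝ) × (Fin m → ℝ) => congrArg
      (fun g => pcost ℓ g ω.2 i) (hdev ω)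
    calc (∑' ω : (Fin n → Fin m → ℝ) × (Fin m → ℝ), (Q ω).toReal *
          pcost ℓ (fun j => Function.update
            (fun _ : Fin n => (id : (Fin m → ℝ) → (Fin m → ℝ))) i f' j (ω.1 j)) ω.2 i)
        = ∑' ω : (Fin n → Fin m → ℝ) × (Fin m → ℝ), (Q ω).toReal *
          pcost ℓ (Function.update ω.1 i (f' (ω.1 i))) ω.2 i := by
          exact tsum_congr (fun ω => by rw [this ω])
      _ = (∑' ω, Q ω * d ω).toReal := by
          exact aux_toReal Q _ (fun ω hω => (hbound _ ω.2 (hQfeas ω hω)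
            (hQsupp ω hω).2 i).1)
  -- the Nash event
  set G : Set ((Fin n → Fin m → ℝ) × (Fin m → ℝ)) :=
    {ω | ∀ i' : Fin n, ω.1 i' ∈ feas (strue i') ∧
      ∀ q ∈ feas (strue i'),
        pcost ℓ ω.1 ω.2 i' ≤ pcost ℓ (Function.update ω.1 i' q) ω.2 i' + ηeq} with hG
  -- P(Gᶜ) ≤ β
  have hGc : P.toOuterMeasure Gᶜ ≤ ENNReal.ofReal β := by
    have hsum : P.toOuterMeasure G + P.toOuterMeasure Gᶜ = 1 := by
      rw [PMF.toOuterMeasure_apply, PMF.toOuterMeasure_apply, ← ENNReal.tsum_add,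
        ← PMF.tsum_coe P]
      apply tsum_congr
      intro ω
      by_cases h : ω ∈ G
      · simp [Set.indicator_of_mem h, Set.indicator_of_notMem (by simpa using h : ω ∉ Gᶜ)]
      · simp [Set.indicator_of_notMem h, Set.indicator_of_mem (by simpa using h : ω ∈ Gᶜ)]
    have h1 : ENNReal.ofReal (1 - β) + P.toOuterMeasure Gᶜ
        ≤ ENNReal.ofReal (1 - β) + ENNReal.ofReal β := by
      calc ENNReal.ofReal (1 - β) + P.toOuterMeasure Gᶜ
          ≤ P.toOuterMeasure G + P.toOuterMeasure Gᶜ :=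
            add_le_add_left (hNash strue) _
        _ = 1 := hsum
        _ = ENNReal.ofReal ((1 - β) + β) := by norm_num
        _ ≤ ENNReal.ofReal (1 - β) + ENNReal.ofReal β := ENNReal.ofReal_add_le
    exact (ENNReal.add_le_add_iff_left ENNReal.ofReal_ne_top).mp h1
  -- Step B : truth-side bound
  have stepB : (∑' ω, P ω * c ω) ≤ ENNReal.ofReal ηeq + ENNReal.ofReal B * ENNReal.ofReal β
      + ∑' ω, P ω * Ψ ω := by
    have hpt : ∀ ω, P ω * c ω ≤ P ω * (Ψ ω + ENNReal.ofReal ηeq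
        + Set.indicator Gᶜ (fun _ => ENNReal.ofReal B) ω) := by
      intro ω
      rcases eq_or_ne (P ω) 0 with h0 | h0
      · simp [h0]
      · apply mul_le_mul_right
        have hcB : c ω ≤ ENNReal.ofReal B :=
          ENNReal.ofReal_le_ofReal (hbound ω.1 ω.2 (hPsupp ω h0).1 (hPsupp ω h0).2 i).2
        by_cases hGmem : ω ∈ G
        · have hN : ∀ p : Fin m → ℝ, c ω ≤
              ENNReal.ofReal (pcost ℓ (Function.update ω.1 i (f' p)) ω.2 i)
              + ENNReal.ofReal ηeq := by
            intro p
            have hstep : c ω ≤ ENNReal.ofReal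
                (pcost ℓ (Function.update ω.1 i (f' p)) ω.2 i + ηeq) :=
              ENNReal.ofReal_le_ofReal ((hGmem i).2 (f' p) (hf' p))
            exact le_trans hstep ENNReal.ofReal_add_le
          have h1 : c ω ≤ (⨅ p : Fin m → ℝ,
              ENNReal.ofReal (pcost ℓ (Function.update ω.1 i (f' p)) ω.2 i))
              + ENNReal.ofReal ηeq := by
            rw [← tsub_le_iff_right]
            exact le_iInf (fun p => tsub_le_iff_right.mpr (hN p))
          have h2 : c ω ≤ Ψ ω + ENNReal.ofReal ηeq := by
            rw [hΨ ω, ← min_add_add_right]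
            exact le_min h1 (le_trans hcB le_self_add)
          exact le_trans h2 le_self_add
        · calc c ω ≤ ENNReal.ofReal B := hcB
            _ = Set.indicator Gᶜ (fun _ => ENNReal.ofReal B) ω := by
                rw [Set.indicator_of_mem (by simpa using hGmem : ω ∈ Gᶜ)]
            _ ≤ _ := le_add_self
    calc (∑' ω, P ω * c ω)
        ≤ ∑' ω, P ω * (Ψ ω + ENNReal.ofReal ηeq
            + Set.indicator Gᶜ (fun _ => ENNReal.ofReal B) ω) :=
          ENNReal.tsum_le_tsum hpt
      _ = (∑' ω, P ω * Ψ ω) + (∑' ω, P ω * ENNReal.ofReal ηeq)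
          + ∑' ω, P ω * Set.indicator Gᶜ (fun _ => ENNReal.ofReal B) ω := by
          rw [← ENNReal.tsum_add, ← ENNReal.tsum_add]
          exact tsum_congr (fun ω => by ring)
      _ ≤ (∑' ω, P ω * Ψ ω) + ENNReal.ofReal ηeq + ENNReal.ofReal B * ENNReal.ofReal β := by
          gcongr
          · rw [ENNReal.tsum_mul_right, PMF.tsum_coe, one_mul]
          · calc (∑' ω, P ω * Set.indicator Gᶜ (fun _ => ENNReal.ofReal B) ω)
                = ENNReal.ofReal B * ∑' ω, Set.indicator Gᶜ (fun a => P a) ω := by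
                  rw [← ENNReal.tsum_mul_left]
                  apply tsum_congr
                  intro ω
                  by_cases h : ω ∈ Gᶜ <;> simp [Set.indicator, h, mul_comm]
              _ = ENNReal.ofReal B * P.toOuterMeasure Gᶜ := by
                  rw [PMF.toOuterMeasure_apply]
              _ ≤ ENNReal.ofReal B * ENNReal.ofReal β := mul_le_mul_right hGc _
      _ = ENNReal.ofReal ηeq + ENNReal.ofReal B * ENNReal.ofReal β
          + ∑' ω, P ω * Ψ ω := by ring
  -- Step C : JDP transfer
  have stepC : (∑' ω, P ω * Ψ ω) ≤ ENNReal.ofReal (Real.exp ε) * (∑' ω, Q ω * Ψ ω)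
      + ENNReal.ofReal δ * ENNReal.ofReal B := by
    rw [aux_swap P Ψ B hΨle, aux_swap Q Ψ B hΨle]
    calc (∫⁻ t in Set.Ioo (0:ℝ) B, P.toOuterMeasure {ω | ENNReal.ofReal t < Ψ ω})
        ≤ ∫⁻ t in Set.Ioo (0:ℝ) B,
            (ENNReal.ofReal (Real.exp ε) * Q.toOuterMeasure {ω | ENNReal.ofReal t < Ψ ω}
              + ENNReal.ofReal δ) := by
          apply lintegral_mono
          intro t
          exact hJDP i (fun j => some (strue j)) r'
            {z | ENNReal.ofReal t < Φ z}
      _ = ENNReal.ofReal (Real.exp ε) *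
            (∫⁻ t in Set.Ioo (0:ℝ) B, Q.toOuterMeasure {ω | ENNReal.ofReal t < Ψ ω})
          + ENNReal.ofReal δ * ENNReal.ofReal B := by
          rw [MeasureTheory.lintegral_add_right _ measurable_const,
            MeasureTheory.lintegral_const_mul' _ _ ENNReal.ofReal_ne_top,
            MeasureTheory.setLIntegral_const, Real.volume_Ioo, sub_zero]
  -- Step D : deviation-side bound
  have stepD : (∑' ω, Q ω * Ψ ω) ≤ ∑' ω, Q ω * d ω := by
    apply ENNReal.tsum_le_tsum
    intro ω
    apply mul_le_mul_right
    rw [hΨ ω]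
    exact le_trans (min_le_left _ _) (iInf_le _ (ω.1 i))
  have hEQdB : (∑' ω, Q ω * d ω) ≤ ENNReal.ofReal B := by
    calc (∑' ω, Q ω * d ω) ≤ ∑' ω, Q ω * ENNReal.ofReal B := by
          apply ENNReal.tsum_le_tsum
          intro ω
          rcases eq_or_ne (Q ω) 0 with h0 | h0
          · simp [h0]
          · exact mul_le_mul_right (ENNReal.ofReal_le_ofReal
              (hbound _ ω.2 (hQfeas ω h0) (hQsupp ω h0).2 i).2) _
      _ = ENNReal.ofReal B := by rw [ENNReal.tsum_mul_right, PMF.tsum_coe, one_mul]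
  have hEQΨB : (∑' ω, Q ω * Ψ ω) ≤ ENNReal.ofReal B := by
    calc (∑' ω, Q ω * Ψ ω) ≤ ∑' ω, Q ω * ENNReal.ofReal B :=
          ENNReal.tsum_le_tsum (fun ω => mul_le_mul_right (hΨle ω) _)
      _ = ENNReal.ofReal B := by rw [ENNReal.tsum_mul_right, PMF.tsum_coe, one_mul]
  -- exp ε ≤ 1 + 2ε step
  have stepE : ENNReal.ofReal (Real.exp ε) * (∑' ω, Q ω * Ψ ω)
      ≤ (∑' ω, Q ω * d ω) + ENNReal.ofReal (2 * ε) * ENNReal.ofReal B := by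
    calc ENNReal.ofReal (Real.exp ε) * (∑' ω, Q ω * Ψ ω)
        ≤ ENNReal.ofReal (1 + 2 * ε) * (∑' ω, Q ω * Ψ ω) := by
          gcongr
          exact aux_exp_le hε0 (le_of_lt hε1)
      _ = (∑' ω, Q ω * Ψ ω) + ENNReal.ofReal (2 * ε) * (∑' ω, Q ω * Ψ ω) := by
          rw [ENNReal.ofReal_add (by norm_num) (by linarith), ENNReal.ofReal_one,
            add_mul, one_mul]
      _ ≤ (∑' ω, Q ω * d ω) + ENNReal.ofReal (2 * ε) * ENNReal.ofReal B := by
          gcongr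
  -- Combine in ENNReal
  have hfinal : (∑' ω, P ω * c ω) ≤ (∑' ω, Q ω * d ω)
      + ENNReal.ofReal (ηeq + B * (2 * ε + β + δ)) := by
    have hR : ENNReal.ofReal ηeq + ENNReal.ofReal B * ENNReal.ofReal β
        + (ENNReal.ofReal (2 * ε) * ENNReal.ofReal B + ENNReal.ofReal δ * ENNReal.ofReal B)
        = ENNReal.ofReal (ηeq + B * (2 * ε + β + δ)) := by
      rw [← ENNReal.ofReal_mul hB0, ← ENNReal.ofReal_mul (by linarith : (0:ℝ) ≤ 2 * ε),
        ← ENNReal.ofReal_mul hδ,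
        ← ENNReal.ofReal_add (by nlinarith : (0:ℝ) ≤ 2 * ε * B) (by nlinarith : (0:ℝ) ≤ δ * B),
        ← ENNReal.ofReal_add hηeq (by nlinarith : (0:ℝ) ≤ B * β),
        ← ENNReal.ofReal_add (by nlinarith : (0:ℝ) ≤ ηeq + B * β) (by nlinarith)]
      congr 1
      ring
    calc (∑' ω, P ω * c ω)
        ≤ ENNReal.ofReal ηeq + ENNReal.ofReal B * ENNReal.ofReal β
          + ∑' ω, P ω * Ψ ω := stepB
      _ ≤ ENNReal.ofReal ηeq + ENNReal.ofReal B * ENNReal.ofReal β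
          + (ENNReal.ofReal (Real.exp ε) * (∑' ω, Q ω * Ψ ω)
            + ENNReal.ofReal δ * ENNReal.ofReal B) := by gcongr
      _ ≤ ENNReal.ofReal ηeq + ENNReal.ofReal B * ENNReal.ofReal β
          + ((∑' ω, Q ω * d ω) + ENNReal.ofReal (2 * ε) * ENNReal.ofReal B
            + ENNReal.ofReal δ * ENNReal.ofReal B) := by gcongr
      _ = (∑' ω, Q ω * d ω) + (ENNReal.ofReal ηeq + ENNReal.ofReal B * ENNReal.ofReal β
          + (ENNReal.ofReal (2 * ε) * ENNReal.ofReal B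
            + ENNReal.ofReal δ * ENNReal.ofReal B)) := by ring
      _ = _ := by rw [hR]
  -- convert to ℝ
  rw [hEP, hEQ]
  have hQfin : (∑' ω, Q ω * d ω) ≠ ⊤ := ne_top_of_le_ne_top ENNReal.ofReal_ne_top hEQdB
  have := ENNReal.toReal_mono (a := ∑' ω, P ω * c ω)
    (ENNReal.add_ne_top.mpr ⟨hQfin, ENNReal.ofReal_ne_top⟩) hfinal
  rw [ENNReal.toReal_add hQfin ENNReal.ofReal_ne_top,
    ENNReal.toReal_ofReal (by nlinarith : (0:ℝ) ≤ ηeq + B * (2 * ε + β + δ))] at this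
  linarith
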